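/- Let ℂ[X] be the polynomial ring in one variable over ℂ and let D : ℂ[X] → ℂ[X] be the operator D(f) = X⁶ · f′, where f′ denotes the formal derivative of f. Then the determinant of the 3×3 matrix whose (j,i)-entry is D^j applied to the i-th element of the triple (1, X³, X⁴), for 0 ≤ j, i ≤ 2, equals 12·X²²; in particular its root multiplicity at 0 is 22. -/

import Mathlib

open Polynomial

theorem wronskian_weight_of_triple_point :
    Matrix.det (Matrix.of fun j i : Fin 3 =>
        (fun f : Polynomial ℂ => X ^ 6 * derivative f)^[(j : ℕ)]
          (![1, X ^ 3, X ^ 4] i)) = 12 * X ^ 22 ∧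
    rootMultiplicity 0
      (Matrix.det (Matrix.of fun j i : Fin 3 =>
        (fun f : Polynomial ℂ => X ^ 6 * derivative f)^[(j : ℕ)]
          (![1, X ^ 3, X ^ 4] i))) = 22 := by
  have hdet : Matrix.det (Matrix.of fun j i : Fin 3 =>
        (fun f : Polynomial ℂ => X ^ 6 * derivative f)^[(j : ℕ)]
          (![1, X ^ 3, X ^ 4] i)) = 12 * X ^ 22 := by
    simp only [Matrix.det_fin_three, Matrix.of_apply, Fin.isValue, Matrix.cons_val_zero,
      Matrix.cons_val_one, Matrix.cons_val_two, Matrix.head_cons, Matrix.tail_cons]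
    norm_num [Function.iterate_succ_apply', derivative_pow]
    simp only [map_ofNat]
    ring
  refine ⟨hdet, ?_⟩
  rw [hdet]
  rw [show (12 : Polynomial ℂ) = C 12 from (map_ofNat C 12).symm]
  rw [rootMultiplicity_mul (mul_ne_zero (by norm_num) (pow_ne_zero _ X_ne_zero))]
  rw [rootMultiplicity_C, show (X : Polynomial ℂ) ^ 22 = (X - C 0) ^ 22 by
    rw [C_0, sub_zero], rootMultiplicity_X_sub_C_pow]
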